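/- Let Γ be a torsion-free abelian group equipped with a function |·|_∞ : Γ → ℝ that is ℤ-homogeneous (|nγ|_∞ = |n||γ|_∞), subadditive, and bounded below by some s > 0 on Γ \ {0}. Suppose Γ has rank k, with linearly independent σ₁,...,σ_k such that the induced function on ℤ^k extends to a norm ‖·‖_∞ on ℝ^k. Then Γ is isomorphic to ℤ^k. -/

import Mathlib

/-- A torsion-free abelian group of rank `k` carrying a ℤ-homogeneous,
subadditive function bounded below by `s > 0` on nonzero elements, which extends
(via linearly independent `σ₁,…,σ_k`) to a norm on `ℝ^k`, is isomorphic to `ℤ^k`. -/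
theorem stmt5 (Γ : Type*) [AddCommGroup Γ] (f : Γ → ℝ) (s : ℝ) (hs : 0 < s)
    (htf : ∀ (n : ℤ) (γ : Γ), n ≠ 0 → n • γ = 0 → γ = 0)
    (hhom : ∀ (n : ℤ) (γ : Γ), f (n • γ) = |(n : ℝ)| * f γ)
    (htri : ∀ γ δ : Γ, f (γ + δ) ≤ f γ + f δ)
    (hlow : ∀ γ : Γ, γ ≠ 0 → s ≤ f γ)
    (k : ℕ) (σ : Fin k → Γ)
    (hindep : ∀ a : Fin k → ℤ, ∑ i, a i • σ i = 0 → a = 0)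
    (hrank : ∀ γ : Γ, ∃ n : ℤ, n ≠ 0 ∧ ∃ a : Fin k → ℤ, n • γ = ∑ i, a i • σ i)
    (N : (Fin k → ℝ) → ℝ)
    (Nhom : ∀ (r : ℝ) (u : Fin k → ℝ), N (r • u) = |r| * N u)
    (Ntri : ∀ u v : Fin k → ℝ, N (u + v) ≤ N u + N v)
    (Ndef : ∀ u : Fin k → ℝ, N u = 0 ↔ u = 0)
    (hext : ∀ a : Fin k → ℤ, N (fun i => (a i : ℝ)) = f (∑ i, a i • σ i)) :
    Nonempty (Γ ≃+ (Fin k → ℤ)) := by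
  classical
  choose n hn a ha using hrank
  set F : Γ → (Fin k → ℝ) := fun γ i => (a γ i : ℝ) / (n γ : ℝ) with hFdef
  -- well-definedness of F
  have key : ∀ (γ : Γ) (m : ℤ) (b : Fin k → ℤ), m ≠ 0 → m • γ = ∑ i, b i • σ i →
      F γ = fun i => (b i : ℝ) / (m : ℝ) := by
    intro γ m b hm hb
    have h0 : ∑ i, (m * a γ i - n γ * b i) • σ i = 0 := by
      have e1 : m • (n γ • γ) = ∑ i, (m * a γ i) • σ i := by
        rw [ha γ, Finset.smul_sum]
        simp [smul_smul]
      have e2 : n γ • (m • γ) = ∑ i, (n γ * b i) • σ i := by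
        rw [hb, Finset.smul_sum]
        simp [smul_smul]
      have e3 : m • n γ • γ = n γ • m • γ := smul_comm m (n γ) γ
      simp only [sub_smul, Finset.sum_sub_distrib, ← e1, ← e2, e3, sub_self]
    have h1 := hindep _ h0
    funext i
    have h2 : m * a γ i - n γ * b i = 0 := congrFun h1 i
    have h3 : (m : ℝ) * (a γ i : ℝ) = (n γ : ℝ) * (b i : ℝ) := by
      have := sub_eq_zero.mp h2
      exact_mod_cast this
    have hm' : (m : ℝ) ≠ 0 := Int.cast_ne_zero.mpr hm
    have hn' : (n γ : ℝ) ≠ 0 := Int.cast_ne_zero.mpr (hn γ)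
    show (a γ i : ℝ) / (n γ : ℝ) = (b i : ℝ) / (m : ℝ)
    field_simp
    linarith [h3]
  have Fadd : ∀ γ δ : Γ, F (γ + δ) = F γ + F δ := by
    intro γ δ
    have hm : n γ * n δ ≠ 0 := mul_ne_zero (hn γ) (hn δ)
    have hb : (n γ * n δ) • (γ + δ) = ∑ i, (n δ * a γ i + n γ * a δ i) • σ i := by
      simp only [add_smul, Finset.sum_add_distrib]
      rw [smul_add]
      congr 1
      · rw [mul_comm, mul_smul, ha γ, Finset.smul_sum]
        simp [smul_smul]
      · rw [mul_smul, ha δ, Finset.smul_sum]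
        simp [smul_smul]
    rw [key _ _ _ hm hb]
    funext i
    have hγ' : (n γ : ℝ) ≠ 0 := Int.cast_ne_zero.mpr (hn γ)
    have hδ' : (n δ : ℝ) ≠ 0 := Int.cast_ne_zero.mpr (hn δ)
    show ((n δ * a γ i + n γ * a δ i : ℤ) : ℝ) / ((n γ * n δ : ℤ) : ℝ)
        = (a γ i : ℝ) / (n γ : ℝ) + (a δ i : ℝ) / (n δ : ℝ)
    push_cast
    field_simp
  have NF : ∀ γ : Γ, N (F γ) = f γ := by
    intro γ
    have hγ' : (n γ : ℝ) ≠ 0 := Int.cast_ne_zero.mpr (hn γ)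
    have : F γ = ((n γ : ℝ))⁻¹ • (fun i => (a γ i : ℝ)) := by
      funext i
      simp [hFdef, div_eq_inv_mul]
    rw [this, Nhom, hext, ← ha γ, hhom, abs_inv, ← mul_assoc,
      inv_mul_cancel₀ (abs_ne_zero.mpr hγ'), one_mul]
  -- N facts
  have N0 : N 0 = 0 := (Ndef 0).mpr rfl
  have Nneg : ∀ u, N (-u) = N u := by
    intro u
    have := Nhom (-1) u
    simpa using this
  have Nnonneg : ∀ u, 0 ≤ N u := by
    intro u
    have h := Ntri u (-u)
    rw [add_neg_cancel, N0, Nneg] at h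
    linarith
  have Nsum : ∀ (t : Finset (Fin k)) (g : Fin k → (Fin k → ℝ)),
      N (∑ i ∈ t, g i) ≤ ∑ i ∈ t, N (g i) := by
    intro t g
    induction t using Finset.cons_induction with
    | empty => simp [N0]
    | cons j t hj ih =>
      rw [Finset.sum_cons, Finset.sum_cons]
      exact le_trans (Ntri _ _) (by linarith)
  set C : ℝ := ∑ j, N ((Pi.single j 1 : Fin k → ℝ)) with hC
  have hCnonneg : 0 ≤ C := Finset.sum_nonneg fun j _ => Nnonneg _
  have Nbound : ∀ u : Fin k → ℝ, N u ≤ C * ‖u‖ := by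
    intro u
    have hu : u = ∑ i, u i • (Pi.single i 1 : Fin k → ℝ) := by
      conv_lhs => rw [pi_eq_sum_univ u]
      refine Finset.sum_congr rfl fun i _ => ?_
      congr 1
      funext j
      simp [Pi.single_apply, eq_comm]
    calc N u = N (∑ i, u i • (Pi.single i 1 : Fin k → ℝ)) := by rw [← hu]
      _ ≤ ∑ i, N (u i • (Pi.single i 1 : Fin k → ℝ)) := Nsum _ _
      _ = ∑ i, |u i| * N ((Pi.single i 1 : Fin k → ℝ)) := by simp [Nhom]
      _ ≤ ∑ i, ‖u‖ * N ((Pi.single i 1 : Fin k → ℝ)) := by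
          refine Finset.sum_le_sum fun i _ => ?_
          have h1 : |u i| ≤ ‖u‖ := by
            have := norm_le_pi_norm u i
            simpa [Real.norm_eq_abs] using this
          exact mul_le_mul_of_nonneg_right h1 (Nnonneg _)
      _ = C * ‖u‖ := by rw [← Finset.mul_sum, mul_comm]
  have Ncont : Continuous N := by
    have hlip : LipschitzWith (Real.toNNReal C) N := by
      apply LipschitzWith.of_dist_le_mul
      intro u v
      rw [Real.dist_eq, dist_eq_norm]
      have h1 : N u - N v ≤ N (u - v) := by
        have := Ntri (u - v) v
        simp only [sub_add_cancel] at this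
        linarith
      have h2 : N v - N u ≤ N (u - v) := by
        have := Ntri (v - u) u
        simp only [sub_add_cancel] at this
        have hneg : N (v - u) = N (u - v) := by rw [← Nneg (u - v)]; congr 1; abel
        linarith [hneg ▸ this]
      have h3 : N (u - v) ≤ C * ‖u - v‖ := Nbound _
      rw [Real.coe_toNNReal C hCnonneg]
      rw [abs_le]
      constructor <;> linarith
    exact hlip.continuous
  -- the linear map and its range
  set Fl : Γ →ₗ[ℤ] (Fin k → ℝ) := (AddMonoidHom.mk' F Fadd).toIntLinearMap with hFl
  have Finj : Function.Injective Fl := by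
    rw [injective_iff_map_eq_zero]
    intro γ hγ
    by_contra hne
    have h1 : s ≤ f γ := hlow γ hne
    have h2 : N (F γ) = f γ := NF γ
    have h3 : F γ = 0 := hγ
    rw [h3, N0] at h2
    linarith
  set L : Submodule ℤ (Fin k → ℝ) := LinearMap.range Fl with hL
  have hdisc : DiscreteTopology L := by
    rw [discreteTopology_iff_isOpen_singleton_zero]
    have hset : ({0} : Set L) = (Subtype.val ⁻¹' {x | N x < s}) := by
      ext ⟨x, hx⟩
      simp only [Set.mem_singleton_iff, Set.mem_preimage, Set.mem_setOf_eq,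
        Submodule.mk_eq_zero]
      constructor
      · rintro rfl; simpa [N0] using hs
      · intro hNx
        obtain ⟨γ, rfl⟩ := hx
        by_contra hne
        have hγne : γ ≠ 0 := by
          rintro rfl
          exact hne (map_zero Fl)
        have : N (Fl γ) = f γ := NF γ
        have := hlow γ hγne
        linarith [NF γ]
    rw [hset]
    exact (isOpen_lt Ncont continuous_const).preimage continuous_subtype_val
  have hlat : IsZLattice ℝ L := by
    constructor
    rw [eq_top_iff]
    rintro x -
    have hx : x ∈ Submodule.span ℝ (Set.range (Pi.basisFun ℝ (Fin k))) := by
      rw [(Pi.basisFun ℝ (Fin k)).span_eq]; trivial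
    refine Submodule.span_mono ?_ hx
    rintro _ ⟨j, rfl⟩
    rw [Pi.basisFun_apply]
    refine ⟨σ j, ?_⟩
    have hb : (1 : ℤ) • σ j = ∑ i, (Pi.single j 1 : Fin k → ℤ) i • σ i := by
      rw [one_smul]
      rw [Finset.sum_eq_single j]
      · simp
      · intro i _ hij
        simp [Pi.single_apply, hij]
      · simp
    have := key (σ j) 1 (Pi.single j 1) one_ne_zero hb
    show Fl (σ j) = _
    have hFl' : Fl (σ j) = F (σ j) := rfl
    rw [hFl', this]
    funext i
    simp [Pi.single_apply]
  have hfree : Module.Free ℤ L := ZLattice.module_free ℝ L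
  have hfin : Module.Finite ℤ L := ZLattice.module_finite ℝ L
  have hrk : Module.finrank ℤ L = k := by
    rw [ZLattice.rank ℝ L, Module.finrank_fintype_fun_eq_card, Fintype.card_fin]
  have hcard : Fintype.card (Module.Free.ChooseBasisIndex ℤ L) = k := by
    rw [← Module.finrank_eq_card_chooseBasisIndex]; exact hrk
  let b := Module.Free.chooseBasis ℤ L
  let e : Module.Free.ChooseBasisIndex ℤ L ≃ Fin k := Fintype.equivFinOfCardEq hcard
  exact ⟨((LinearEquiv.ofInjective Fl Finj).trans (b.equivFun.trans
    (LinearEquiv.funCongrLeft ℤ ℤ e.symm))).toAddEquiv⟩
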